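/- Let X be a ringed space, N a g-pure-injective O_X-module, and U ⊆ X open. Then the restriction N|_U is a g-pure-injective O_U-module. -/

import Mathlib

open TopologicalSpace CategoryTheory

universe u

namespace SheafPurity

/-! ## Purity for modules over a ring (via finite systems of linear equations) -/

/-- A linear map is a pure monomorphism if it is injective and every finite system of
linear equations with constants in `A` that is solvable in `B` is solvable in `A`. -/
def IsPureMono {R : Type u} [Ring R] {A B : Type u} [AddCommGroup A] [Module R A]
    [AddCommGroup B] [Module R B] (f : A →ₗ[R] B) : Prop :=
  Function.Injective f ∧
    ∀ (m n : ℕ) (G : Matrix (Fin m) (Fin n) R) (a : Fin m → A) (b : Fin n → B),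
      (∀ i, (∑ j, G i j • b j) = f (a i)) →
      ∃ a' : Fin n → A, ∀ i, (∑ j, G i j • a' j) = a i

/-- A module is pure-injective if every morphism to it extends along pure monomorphisms. -/
def PureInjectiveModule (R : Type u) [Ring R] (M : Type u) [AddCommGroup M]
    [Module R M] : Prop :=
  ∀ (A B : Type u) [AddCommGroup A] [Module R A] [AddCommGroup B] [Module R B]
    (f : A →ₗ[R] B), IsPureMono f → ∀ g : A →ₗ[R] M, ∃ h : B →ₗ[R] M, h.comp f = g

/-! ## Sheaves of rings and sheaves of modules on a topological space -/

variable (X : Type u) [TopologicalSpace X]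

/-- The sheaf condition for a family of sections with restriction maps: compatible
families of sections over a cover glue uniquely. -/
def IsSheafFamily (F : Opens X → Type u)
    (res : ∀ (U V : Opens X), V ≤ U → F U → F V) : Prop :=
  ∀ (ι : Type u) (U : Opens X) (V : ι → Opens X) (hU : U = iSup V) (s : ∀ i, F (V i)),
    (∀ (i j : ι) (W : Opens X) (hWi : W ≤ V i) (hWj : W ≤ V j),
      res (V i) W hWi (s i) = res (V j) W hWj (s j)) →
    ∃! t : F U, ∀ i, res U (V i) ((le_iSup V i).trans hU.ge) t = s i

/-- A sheaf of commutative rings on `X`; `X` together with such a sheaf is a ringed space. -/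
structure RingSheaf where
  obj : Opens X → Type u
  ring : ∀ U, CommRing (obj U)
  res : ∀ {U V : Opens X}, V ≤ U → obj U →+* obj V
  res_id : ∀ {U : Opens X} (s : obj U), res le_rfl s = s
  res_res : ∀ {U V W : Opens X} (h1 : W ≤ V) (h2 : V ≤ U) (s : obj U),
    res h1 (res h2 s) = res (h1.trans h2) s
  sheaf : IsSheafFamily X obj fun _ _ h s => res h s

attribute [instance] RingSheaf.ring

variable {X}

/-- A sheaf of `O`-modules on the ringed space `(X, O)`. -/
structure OMod (O : RingSheaf X) where
  obj : Opens X → Type u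
  acg : ∀ U, AddCommGroup (obj U)
  mod : ∀ U, Module (O.obj U) (obj U)
  res : ∀ {U V : Opens X}, V ≤ U → obj U →+ obj V
  res_id : ∀ {U : Opens X} (s : obj U), res le_rfl s = s
  res_res : ∀ {U V W : Opens X} (h1 : W ≤ V) (h2 : V ≤ U) (s : obj U),
    res h1 (res h2 s) = res (h1.trans h2) s
  res_smul : ∀ {U V : Opens X} (h : V ≤ U) (r : O.obj U) (m : obj U),
    res h (r • m) = O.res h r • res h m
  sheaf : IsSheafFamily X obj fun _ _ h s => res h s

attribute [instance] OMod.acg OMod.mod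

variable {O : RingSheaf X}

/-- Morphisms of sheaves of `O`-modules. -/
@[ext]
structure Hom (M N : OMod O) where
  app : ∀ U, M.obj U →ₗ[O.obj U] N.obj U
  naturality : ∀ {U V : Opens X} (h : V ≤ U) (m : M.obj U),
    N.res h (app U m) = app V (M.res h m)

instance : Category (OMod O) where
  Hom M N := Hom M N
  id M := ⟨fun _ => LinearMap.id, fun _ _ => rfl⟩
  comp f g := ⟨fun U => (g.app U).comp (f.app U), fun h m => by
    simp only [LinearMap.comp_apply]
    rw [g.naturality, f.naturality]⟩
  id_comp f := by apply Hom.ext; rfl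
  comp_id f := by apply Hom.ext; rfl
  assoc f g h := by apply Hom.ext; rfl

lemma hom_app {M N : OMod O} (f : M ⟶ N) (U : Opens X) : (f : Hom M N).app U = f.app U := rfl

@[simp] lemma comp_app {M N P : OMod O} (f : M ⟶ N) (g : N ⟶ P) (U : Opens X) (m : M.obj U) :
    (f ≫ g).app U m = g.app U (f.app U m) := rfl

@[simp] lemma id_app (M : OMod O) (U : Opens X) (m : M.obj U) :
    (Hom.app (𝟙 M) U) m = m := rfl

end SheafPurity

namespace SheafPurity

variable {X : Type u} [TopologicalSpace X] {O : RingSheaf X}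

/-! ## Stalks -/

/-- An open neighbourhood of `x`. -/
structure Nbhd (x : X) where
  U : Opens X
  mem : x ∈ U

instance (x : X) : Inhabited (Nbhd x) := ⟨⟨⊤, trivial⟩⟩

/-- Intersection of neighbourhoods. -/
def Nbhd.inf {x : X} (N₁ N₂ : Nbhd x) : Nbhd x := ⟨N₁.U ⊓ N₂.U, ⟨N₁.mem, N₂.mem⟩⟩

lemma Nbhd.inf_le_left {x : X} (N₁ N₂ : Nbhd x) : (N₁.inf N₂).U ≤ N₁.U := _root_.inf_le_left
lemma Nbhd.inf_le_right {x : X} (N₁ N₂ : Nbhd x) : (N₁.inf N₂).U ≤ N₂.U := _root_.inf_le_right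

/-- The germ relation. -/
def germRel (M : OMod O) (x : X) :
    (Σ N : Nbhd x, M.obj N.U) → (Σ N : Nbhd x, M.obj N.U) → Prop :=
  fun a b => ∃ (N : Nbhd x) (h₁ : N.U ≤ a.1.U) (h₂ : N.U ≤ b.1.U),
    M.res h₁ a.2 = M.res h₂ b.2

/-- The stalk of a sheaf of modules at a point. -/
def Stalk (M : OMod O) (x : X) : Type u := Quot (germRel M x)

/-- The germ of a section. -/
def germ {M : OMod O} {x : X} (N : Nbhd x) (s : M.obj N.U) : Stalk M x :=
  Quot.mk _ ⟨N, s⟩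

lemma germ_eq {M : OMod O} {x : X} {N₁ N₂ : Nbhd x} {s₁ : M.obj N₁.U} {s₂ : M.obj N₂.U}
    (N : Nbhd x) (h₁ : N.U ≤ N₁.U) (h₂ : N.U ≤ N₂.U)
    (h : M.res h₁ s₁ = M.res h₂ s₂) : germ N₁ s₁ = germ N₂ s₂ :=
  Quot.sound ⟨N, h₁, h₂, h⟩

lemma germ_res {M : OMod O} {x : X} {N₁ N₂ : Nbhd x} (h : N₂.U ≤ N₁.U) (s : M.obj N₁.U) :
    germ N₂ (M.res h s) = germ N₁ s :=
  germ_eq N₂ le_rfl h (by rw [M.res_id])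

lemma germ_surj {M : OMod O} {x : X} (t : Stalk M x) : ∃ (N : Nbhd x) (s : M.obj N.U), t = germ N s := by
  induction t using Quot.ind with
  | _ a => exact ⟨a.1, a.2, rfl⟩

/-- Lift a binary germ-compatible operation to stalks. -/
def lift₂ {M₁ M₂ : OMod O} {x : X} {γ : Sort*}
    (f : ∀ (N₁ : Nbhd x), M₁.obj N₁.U → ∀ (N₂ : Nbhd x), M₂.obj N₂.U → γ)
    (hl : ∀ N₁ s₁ N₁' s₁' N₂ s₂, germRel M₁ x ⟨N₁, s₁⟩ ⟨N₁', s₁'⟩ →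
      f N₁ s₁ N₂ s₂ = f N₁' s₁' N₂ s₂)
    (hr : ∀ N₁ s₁ N₂ s₂ N₂' s₂', germRel M₂ x ⟨N₂, s₂⟩ ⟨N₂', s₂'⟩ →
      f N₁ s₁ N₂ s₂ = f N₁ s₁ N₂' s₂') :
    Stalk M₁ x → Stalk M₂ x → γ :=
  Quot.lift
    (fun a => Quot.lift (fun b => f a.1 a.2 b.1 b.2)
      (fun b b' hb => hr a.1 a.2 b.1 b.2 b'.1 b'.2 hb))
    (fun a a' ha => funext fun t => by
      induction t using Quot.ind with
      | _ b => exact hl a.1 a.2 a'.1 a'.2 b.1 b.2 ha)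

@[simp] lemma lift₂_germ {M₁ M₂ : OMod O} {x : X} {γ : Sort*}
    (f : ∀ (N₁ : Nbhd x), M₁.obj N₁.U → ∀ (N₂ : Nbhd x), M₂.obj N₂.U → γ) (hl hr)
    (N₁ : Nbhd x) (s₁ : M₁.obj N₁.U) (N₂ : Nbhd x) (s₂ : M₂.obj N₂.U) :
    lift₂ (γ := γ) f hl hr (germ N₁ s₁) (germ N₂ s₂) = f N₁ s₁ N₂ s₂ := rfl

end SheafPurity

namespace SheafPurity

variable {X : Type u} [TopologicalSpace X] {O : RingSheaf X}

protected def Stalk.add {M : OMod O} {x : X} : Stalk M x → Stalk M x → Stalk M x :=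
  lift₂ (fun N₁ s₁ N₂ s₂ => germ (N₁.inf N₂)
      (M.res (N₁.inf_le_left N₂) s₁ + M.res (N₁.inf_le_right N₂) s₂))
    (by
      rintro N₁ s₁ N₁' s₁' N₂ s₂ ⟨W, h₁, h₂, he⟩
      refine germ_eq (W.inf N₂) (show (W.inf N₂).U ≤ (N₁.inf N₂).U from inf_le_inf_right _ h₁) (show (W.inf N₂).U ≤ (N₁'.inf N₂).U from inf_le_inf_right _ h₂) ?_
      simp only [map_add, M.res_res]
      congr 1
      rw [← M.res_res (W.inf_le_left N₂) h₁, he, M.res_res])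
    (by
      rintro N₁ s₁ N₂ s₂ N₂' s₂' ⟨W, h₁, h₂, he⟩
      refine germ_eq (N₁.inf W) (show (N₁.inf W).U ≤ (N₁.inf N₂).U from inf_le_inf_left _ h₁) (show (N₁.inf W).U ≤ (N₁.inf N₂').U from inf_le_inf_left _ h₂) ?_
      simp only [map_add, M.res_res]
      congr 1
      rw [← M.res_res (N₁.inf_le_right W) h₁, he, M.res_res])

protected def Stalk.neg {M : OMod O} {x : X} : Stalk M x → Stalk M x :=
  Quot.lift (fun a => germ a.1 (-a.2)) (by
    rintro a b ⟨W, h₁, h₂, he⟩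
    exact germ_eq W h₁ h₂ (by simp only [map_neg, he]))

@[simp] lemma add_germ {M : OMod O} {x : X} (N₁ N₂ : Nbhd x) (s₁ : M.obj N₁.U)
    (s₂ : M.obj N₂.U) : Stalk.add (germ N₁ s₁) (germ N₂ s₂) =
      germ (N₁.inf N₂) (M.res (N₁.inf_le_left N₂) s₁ + M.res (N₁.inf_le_right N₂) s₂) := rfl

@[simp] lemma neg_germ {M : OMod O} {x : X} (N : Nbhd x) (s : M.obj N.U) :
    Stalk.neg (germ N s) = germ N (-s) := rfl


section AddGroup
variable {M : OMod O} {x : X}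

set_option maxHeartbeats 1000000 in
lemma stalk_add_assoc (a b c : Stalk M x) :
    Stalk.add (Stalk.add a b) c = Stalk.add a (Stalk.add b c) := by
  obtain ⟨N₁, s₁, rfl⟩ := germ_surj a
  obtain ⟨N₂, s₂, rfl⟩ := germ_surj b
  obtain ⟨N₃, s₃, rfl⟩ := germ_surj c
  simp only [add_germ]
  refine germ_eq ((N₁.inf N₂).inf N₃) le_rfl (le_of_eq (inf_assoc _ _ _)) ?_
  simp only [map_add, M.res_res, add_assoc]

lemma stalk_zero_add (a : Stalk M x) :
    Stalk.add (germ (default : Nbhd x) 0) a = a := by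
  obtain ⟨N, s, rfl⟩ := germ_surj a
  simp only [add_germ]
  refine germ_eq ((default : Nbhd x).inf N) le_rfl (Nbhd.inf_le_right _ _) ?_
  simp only [map_add, map_zero, M.res_res, zero_add]

lemma stalk_add_zero (a : Stalk M x) :
    Stalk.add a (germ (default : Nbhd x) 0) = a := by
  obtain ⟨N, s, rfl⟩ := germ_surj a
  simp only [add_germ]
  refine germ_eq (N.inf (default : Nbhd x)) le_rfl (Nbhd.inf_le_left _ _) ?_
  simp only [map_add, map_zero, M.res_res, add_zero]

lemma stalk_add_comm (a b : Stalk M x) : Stalk.add a b = Stalk.add b a := by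
  obtain ⟨N₁, s₁, rfl⟩ := germ_surj a
  obtain ⟨N₂, s₂, rfl⟩ := germ_surj b
  simp only [add_germ]
  refine germ_eq (N₁.inf N₂) le_rfl (le_of_eq (inf_comm _ _)) ?_
  simp only [map_add, M.res_res, add_comm]

lemma stalk_neg_add_cancel (a : Stalk M x) :
    Stalk.add (Stalk.neg a) a = germ (default : Nbhd x) 0 := by
  obtain ⟨N, s, rfl⟩ := germ_surj a
  simp only [neg_germ, add_germ]
  refine germ_eq (N.inf N) le_rfl le_top ?_
  simp only [map_add, map_neg, map_zero, neg_add_cancel]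

instance : Add (Stalk M x) := ⟨Stalk.add⟩
instance : Neg (Stalk M x) := ⟨Stalk.neg⟩
instance : Zero (Stalk M x) := ⟨germ (default : Nbhd x) 0⟩

instance : AddCommGroup (Stalk M x) where
  add := (· + ·)
  neg := Neg.neg
  zero := 0
  add_assoc := stalk_add_assoc
  zero_add := stalk_zero_add
  add_zero := stalk_add_zero
  add_comm := stalk_add_comm
  neg_add_cancel := stalk_neg_add_cancel
  nsmul := nsmulRec
  nsmul_zero := fun _ => rfl
  nsmul_succ := fun _ _ => rfl
  zsmul := zsmulRec
  zsmul_zero' := fun _ => rfl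
  zsmul_succ' := fun _ _ => rfl
  zsmul_neg' := fun _ _ => rfl

end AddGroup

@[simp] lemma germ_add {M : OMod O} {x : X} (N : Nbhd x) (s t : M.obj N.U) :
    (germ N (s + t) : Stalk M x) = germ N s + germ N t := by
  show _ = Stalk.add _ _
  simp only [add_germ]
  exact germ_eq (N.inf N) (Nbhd.inf_le_left _ _) le_rfl (by simp [map_add, M.res_res])

@[simp] lemma germ_zero {M : OMod O} {x : X} (N : Nbhd x) :
    (germ N (0 : M.obj N.U) : Stalk M x) = 0 := by
  show _ = germ (default : Nbhd x) 0
  exact germ_eq N le_rfl le_top (by simp)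

end SheafPurity

namespace SheafPurity

variable {X : Type u} [TopologicalSpace X] {O : RingSheaf X}

section MoreStalk
variable {M : OMod O} {x : X}

@[simp] lemma add_germ' (N₁ N₂ : Nbhd x) (s₁ : M.obj N₁.U) (s₂ : M.obj N₂.U) :
    germ N₁ s₁ + germ N₂ s₂ =
      germ (N₁.inf N₂) (M.res (N₁.inf_le_left N₂) s₁ + M.res (N₁.inf_le_right N₂) s₂) := rfl

@[simp] lemma neg_germ' (N : Nbhd x) (s : M.obj N.U) :
    -(germ N s) = germ N (-s) := rfl

lemma zero_def : (0 : Stalk M x) = germ (default : Nbhd x) 0 := rfl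

end MoreStalk

/-- A sheaf of rings, regarded as a sheaf of modules over itself. -/
@[reducible] def RingSheaf.toOMod (O : RingSheaf X) : OMod O where
  obj := O.obj
  acg U := inferInstance
  mod U := inferInstance
  res h := (O.res h).toAddMonoidHom
  res_id := O.res_id
  res_res := O.res_res
  res_smul h r m := by simpa [smul_eq_mul] using map_mul (O.res h) r m
  sheaf := O.sheaf

/-- The stalk of the structure sheaf at a point. -/
abbrev RStalk (O : RingSheaf X) (x : X) : Type u := Stalk O.toOMod x

section RingStalk

variable {x : X}

@[simp] lemma rh_apply {α β : Type u} [NonAssocSemiring α] [NonAssocSemiring β]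
    (f : α →+* β) (a : α) : f.toAddMonoidHom a = f a := rfl

@[simp] lemma toOMod_res {U V : Opens X} (h : V ≤ U) (s : O.obj U) :
    O.toOMod.res h s = O.res h s := rfl

protected def RStalk.mul : RStalk O x → RStalk O x → RStalk O x :=
  lift₂ (fun N₁ s₁ N₂ s₂ => germ (N₁.inf N₂)
      (O.res (N₁.inf_le_left N₂) s₁ * O.res (N₁.inf_le_right N₂) s₂))
    (by
      rintro N₁ s₁ N₁' s₁' N₂ s₂ ⟨W, h₁, h₂, he⟩
      refine germ_eq (W.inf N₂) (show (W.inf N₂).U ≤ (N₁.inf N₂).U from inf_le_inf_right _ h₁) (show (W.inf N₂).U ≤ (N₁'.inf N₂).U from inf_le_inf_right _ h₂) ?_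
      have he' : O.res h₁ s₁ = O.res h₂ s₁' := he
      show O.res _ _ = O.res _ _
      simp only [map_mul, O.res_res]
      congr 1
      rw [← O.res_res (W.inf_le_left N₂) h₁, he', O.res_res])
    (by
      rintro N₁ s₁ N₂ s₂ N₂' s₂' ⟨W, h₁, h₂, he⟩
      refine germ_eq (N₁.inf W) (show (N₁.inf W).U ≤ (N₁.inf N₂).U from inf_le_inf_left _ h₁) (show (N₁.inf W).U ≤ (N₁.inf N₂').U from inf_le_inf_left _ h₂) ?_
      have he' : O.res h₁ s₂ = O.res h₂ s₂' := he
      show O.res _ _ = O.res _ _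
      simp only [map_mul, O.res_res]
      congr 1
      rw [← O.res_res (N₁.inf_le_right W) h₁, he', O.res_res])

instance : Mul (RStalk O x) := ⟨RStalk.mul⟩
instance : One (RStalk O x) := ⟨germ (M := O.toOMod) (default : Nbhd x) 1⟩

@[simp] lemma mul_germ (N₁ N₂ : Nbhd x) (s₁ : O.obj N₁.U) (s₂ : O.obj N₂.U) :
    (germ (M := O.toOMod) N₁ s₁) * (germ (M := O.toOMod) N₂ s₂) =
      germ (N₁.inf N₂) (O.res (N₁.inf_le_left N₂) s₁ * O.res (N₁.inf_le_right N₂) s₂) := rfl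

lemma one_def : (1 : RStalk O x) = germ (M := O.toOMod) (default : Nbhd x) 1 := rfl


section RingAx
variable {x : X}

lemma r_mul_assoc (a b c : RStalk O x) : a * b * c = a * (b * c) := by
  obtain ⟨N₁, s₁, rfl⟩ := germ_surj a
  obtain ⟨N₂, s₂, rfl⟩ := germ_surj b
  obtain ⟨N₃, s₃, rfl⟩ := germ_surj c
  simp only [mul_germ]
  refine germ_eq ((N₁.inf N₂).inf N₃) le_rfl (le_of_eq (inf_assoc _ _ _)) ?_
  simp only [rh_apply, map_mul, O.res_res, mul_assoc]

lemma r_one_mul (a : RStalk O x) : 1 * a = a := by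
  obtain ⟨N, s, rfl⟩ := germ_surj a
  rw [one_def]
  simp only [mul_germ]
  refine germ_eq ((default : Nbhd x).inf N) le_rfl (Nbhd.inf_le_right _ _) ?_
  simp only [rh_apply, map_mul, map_one, O.res_res, one_mul]

lemma r_mul_comm (a b : RStalk O x) : a * b = b * a := by
  obtain ⟨N₁, s₁, rfl⟩ := germ_surj a
  obtain ⟨N₂, s₂, rfl⟩ := germ_surj b
  simp only [mul_germ]
  refine germ_eq (N₁.inf N₂) le_rfl (le_of_eq (inf_comm _ _)) ?_
  simp only [rh_apply, map_mul, O.res_res, mul_comm]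

lemma r_mul_one (a : RStalk O x) : a * 1 = a := by
  rw [r_mul_comm, r_one_mul]

lemma r_left_distrib (a b c : RStalk O x) : a * (b + c) = a * b + a * c := by
  obtain ⟨N₁, s₁, rfl⟩ := germ_surj a
  obtain ⟨N₂, s₂, rfl⟩ := germ_surj b
  obtain ⟨N₃, s₃, rfl⟩ := germ_surj c
  simp only [add_germ' (M := O.toOMod), mul_germ]
  refine germ_eq (N₁.inf (N₂.inf N₃)) le_rfl
    (show _ ≤ _ from le_inf (inf_le_inf_left _ (Nbhd.inf_le_left _ _))
      (inf_le_inf_left _ (Nbhd.inf_le_right _ _))) ?_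
  simp only [rh_apply, map_mul, map_add, O.res_res, mul_add]

lemma r_right_distrib (a b c : RStalk O x) : (a + b) * c = a * c + b * c := by
  rw [r_mul_comm, r_left_distrib, r_mul_comm c a, r_mul_comm c b]

lemma r_zero_mul (a : RStalk O x) : 0 * a = 0 := by
  obtain ⟨N, s, rfl⟩ := germ_surj a
  rw [zero_def]
  simp only [mul_germ]
  refine germ_eq ((default : Nbhd x).inf N) le_rfl le_top ?_
  simp only [rh_apply, map_mul, map_zero, zero_mul]

lemma r_mul_zero (a : RStalk O x) : a * 0 = 0 := by
  rw [r_mul_comm, r_zero_mul]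

instance : CommRing (RStalk O x) where
  __ := (inferInstance : AddCommGroup (Stalk (O.toOMod) x))
  mul := (· * ·)
  one := 1
  mul_assoc := r_mul_assoc
  one_mul := r_one_mul
  mul_one := r_mul_one
  mul_comm := r_mul_comm
  left_distrib := r_left_distrib
  right_distrib := r_right_distrib
  zero_mul := r_zero_mul
  mul_zero := r_mul_zero

end RingAx

/-- The germ map for the structure sheaf, as a ring homomorphism. -/
def RingSheaf.germHom (O : RingSheaf X) {x : X} (N : Nbhd x) : O.obj N.U →+* RStalk O x where
  toFun s := germ (M := O.toOMod) N s
  map_one' := by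
    rw [one_def]
    exact germ_eq N le_rfl le_top (by simp only [rh_apply, map_one])
  map_mul' r s := by
    show germ (M := O.toOMod) N (r * s) = germ (M := O.toOMod) N r * germ (M := O.toOMod) N s
    rw [mul_germ]
    exact germ_eq (N.inf N) (Nbhd.inf_le_left _ _) le_rfl
      (by simp only [rh_apply, map_mul, O.res_res])
  map_zero' := by
    show germ (M := O.toOMod) N 0 = 0
    exact germ_zero (M := O.toOMod) N
  map_add' r s := by
    show germ (M := O.toOMod) N (r + s) = germ (M := O.toOMod) N r + germ (M := O.toOMod) N s
    exact germ_add (M := O.toOMod) N r s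

@[simp] lemma germHom_apply {x : X} (N : Nbhd x) (s : O.obj N.U) :
    O.germHom N s = germ (M := O.toOMod) N s := rfl

lemma germ_res_ring {x : X} {N₁ N₂ : Nbhd x} (h : N₂.U ≤ N₁.U) (s : O.obj N₁.U) :
    germ (M := O.toOMod) N₂ (O.res h s) = germ (M := O.toOMod) N₁ s :=
  germ_res (M := O.toOMod) h s

end RingStalk

end SheafPurity

namespace SheafPurity

variable {X : Type u} [TopologicalSpace X] {O : RingSheaf X}

section ModuleStalk

variable {M : OMod O} {x : X}

protected def Stalk.smul : RStalk O x → Stalk M x → Stalk M x :=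
  lift₂ (fun N₁ r N₂ s => germ (N₁.inf N₂)
      (O.res (N₁.inf_le_left N₂) r • M.res (N₁.inf_le_right N₂) s))
    (by
      rintro N₁ r N₁' r' N₂ s ⟨W, h₁, h₂, he⟩
      refine germ_eq (W.inf N₂) (show (W.inf N₂).U ≤ (N₁.inf N₂).U from inf_le_inf_right _ h₁) (show (W.inf N₂).U ≤ (N₁'.inf N₂).U from inf_le_inf_right _ h₂) ?_
      have he' : O.res h₁ r = O.res h₂ r' := he
      simp only [map_add, M.res_smul, M.res_res, O.res_res]
      congr 1
      rw [← O.res_res (W.inf_le_left N₂) h₁, he', O.res_res])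
    (by
      rintro N₁ r N₂ s N₂' s' ⟨W, h₁, h₂, he⟩
      refine germ_eq (N₁.inf W) (show (N₁.inf W).U ≤ (N₁.inf N₂).U from inf_le_inf_left _ h₁) (show (N₁.inf W).U ≤ (N₁.inf N₂').U from inf_le_inf_left _ h₂) ?_
      simp only [M.res_smul, M.res_res, O.res_res]
      congr 1
      rw [← M.res_res (N₁.inf_le_right W) h₁, he, M.res_res])

instance : SMul (RStalk O x) (Stalk M x) := ⟨Stalk.smul⟩

@[simp] lemma smul_germ (N₁ N₂ : Nbhd x) (r : O.obj N₁.U) (s : M.obj N₂.U) :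
    (germ (M := O.toOMod) N₁ r) • (germ N₂ s) =
      germ (N₁.inf N₂) (O.res (N₁.inf_le_left N₂) r • M.res (N₁.inf_le_right N₂) s) := rfl

lemma st_one_smul (a : Stalk M x) : (1 : RStalk O x) • a = a := by
  obtain ⟨N, s, rfl⟩ := germ_surj a
  rw [one_def]
  simp only [smul_germ]
  refine germ_eq ((default : Nbhd x).inf N) le_rfl (Nbhd.inf_le_right _ _) ?_
  simp only [M.res_smul, M.res_res, map_one, one_smul]

lemma st_mul_smul (r t : RStalk O x) (a : Stalk M x) : (r * t) • a = r • t • a := by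
  obtain ⟨N₁, r, rfl⟩ := germ_surj r
  obtain ⟨N₂, t, rfl⟩ := germ_surj t
  obtain ⟨N₃, s, rfl⟩ := germ_surj a
  simp only [mul_germ, smul_germ]
  refine germ_eq ((N₁.inf N₂).inf N₃) le_rfl (le_of_eq (inf_assoc _ _ _)) ?_
  simp only [rh_apply, M.res_smul, M.res_res, O.res_res, map_mul, mul_smul]

lemma st_smul_add (r : RStalk O x) (a b : Stalk M x) : r • (a + b) = r • a + r • b := by
  obtain ⟨N₁, rr, rfl⟩ := germ_surj r
  obtain ⟨N₂, s, rfl⟩ := germ_surj a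
  obtain ⟨N₃, t, rfl⟩ := germ_surj b
  simp only [add_germ', smul_germ]
  refine germ_eq (N₁.inf (N₂.inf N₃)) le_rfl
    (show _ ≤ _ from le_inf (inf_le_inf_left _ (Nbhd.inf_le_left _ _))
      (inf_le_inf_left _ (Nbhd.inf_le_right _ _))) ?_
  simp only [rh_apply, M.res_smul, M.res_res, O.res_res, map_add, smul_add]

lemma st_smul_zero (r : RStalk O x) : r • (0 : Stalk M x) = 0 := by
  obtain ⟨N, rr, rfl⟩ := germ_surj r
  rw [zero_def]
  simp only [smul_germ]
  refine germ_eq (N.inf (default : Nbhd x)) le_rfl le_top ?_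
  simp only [map_zero, smul_zero]

lemma st_add_smul (r t : RStalk O x) (a : Stalk M x) : (r + t) • a = r • a + t • a := by
  obtain ⟨N₁, rr, rfl⟩ := germ_surj r
  obtain ⟨N₂, tt, rfl⟩ := germ_surj t
  obtain ⟨N₃, s, rfl⟩ := germ_surj a
  simp only [add_germ', smul_germ]
  refine germ_eq ((N₁.inf N₂).inf N₃) le_rfl
    (show _ ≤ _ from le_inf (inf_le_inf_right _ (Nbhd.inf_le_left _ _))
      (inf_le_inf_right _ (Nbhd.inf_le_right _ _))) ?_
  simp only [rh_apply, M.res_smul, M.res_res, O.res_res, map_add, add_smul]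

lemma st_zero_smul (a : Stalk M x) : (0 : RStalk O x) • a = 0 := by
  obtain ⟨N, s, rfl⟩ := germ_surj a
  rw [zero_def]
  simp only [smul_germ]
  refine germ_eq ((default : Nbhd x).inf N) le_rfl le_top ?_
  simp only [rh_apply, map_zero, zero_smul]

instance : Module (RStalk O x) (Stalk M x) where
  smul := (· • ·)
  one_smul := st_one_smul
  mul_smul := st_mul_smul
  smul_add := st_smul_add
  smul_zero := st_smul_zero
  add_smul := st_add_smul
  zero_smul := st_zero_smul

lemma germ_smul (N : Nbhd x) (r : O.obj N.U) (s : M.obj N.U) :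
    (germ N (r • s) : Stalk M x) = O.germHom N r • germ N s := by
  rw [germHom_apply]
  simp only [smul_germ]
  exact germ_eq (N.inf N) (Nbhd.inf_le_left _ _) le_rfl
    (by simp only [M.res_smul, M.res_res, O.res_res, rh_apply])

end ModuleStalk

/-- The underlying function of the map induced on stalks by a morphism. -/
def stalkMapFun {M N : OMod O} (f : Hom M N) (x : X) : Stalk M x → Stalk N x :=
  Quot.lift (fun a => germ a.1 (f.app _ a.2)) (by
    rintro a b ⟨W, h₁, h₂, he⟩
    refine germ_eq W h₁ h₂ ?_
    rw [f.naturality, f.naturality, he])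

@[simp] lemma stalkMapFun_germ {M N : OMod O} (f : Hom M N) (x : X)
    (Nb : Nbhd x) (s : M.obj Nb.U) :
    stalkMapFun f x (germ Nb s) = germ Nb (f.app Nb.U s) := rfl

/-- The map induced on stalks by a morphism of sheaves of modules, as a linear map
over the stalk of the structure sheaf. -/
def stalkMap {M N : OMod O} (f : M ⟶ N) (x : X) : Stalk M x →ₗ[RStalk O x] Stalk N x where
  toFun := stalkMapFun f x
  map_add' a b := by
    obtain ⟨N₁, s₁, rfl⟩ := germ_surj a
    obtain ⟨N₂, s₂, rfl⟩ := germ_surj b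
    simp only [add_germ', stalkMapFun_germ]
    refine germ_eq (N₁.inf N₂) le_rfl le_rfl ?_
    simp only [map_add, N.res_res, M.res_res, Hom.naturality]
  map_smul' r a := by
    obtain ⟨N₁, rr, rfl⟩ := germ_surj r
    obtain ⟨N₂, s, rfl⟩ := germ_surj a
    simp only [smul_germ, stalkMapFun_germ, RingHom.id_apply]
    refine germ_eq (N₁.inf N₂) le_rfl le_rfl ?_
    simp only [map_smul, N.res_smul, M.res_res, N.res_res, O.res_res, Hom.naturality]

@[simp] lemma stalkMap_germ {M N : OMod O} (f : M ⟶ N) (x : X) (Nb : Nbhd x) (s : M.obj Nb.U) :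
    stalkMap f x (germ Nb s) = germ Nb ((f : Hom M N).app Nb.U s) := rfl

/-! ## Geometric purity -/

/-- A morphism of sheaves of modules is a geometrically pure monomorphism if it is a
monomorphism (i.e. injective on sections) and the induced map on every stalk is a pure
monomorphism of modules over the stalk ring. -/
def IsGPureMono {M N : OMod O} (f : M ⟶ N) : Prop :=
  (∀ U, Function.Injective ((f : Hom M N).app U)) ∧
    ∀ x : X, IsPureMono (stalkMap f x)

/-- A sheaf of modules is geometrically pure-injective if every morphism to it extends
along every geometrically pure monomorphism. -/
def GPureInjective (P : OMod O) : Prop :=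
  ∀ (M N : OMod O) (f : M ⟶ N), IsGPureMono f →
    ∀ φ : M ⟶ P, ∃ ψ : N ⟶ P, f ≫ ψ = φ

end SheafPurity

namespace SheafPurity

variable {X : Type u} [TopologicalSpace X] {O : RingSheaf X}

/-! ## Skyscraper sheaves -/

section Sky

variable (x : X) (A : Type u) [AddCommGroup A] [Module (RStalk O x) A]

/-- The module structure on the sections of the skyscraper sheaf. -/
def skyModule (U : Opens X) : Module (O.obj U) (PLift (x ∈ U) → A) where
  smul r f := fun h => (O.germHom ⟨U, h.down⟩ r) • f h
  one_smul f := funext fun h => by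
    show O.germHom ⟨U, h.down⟩ 1 • f h = f h
    simp
  mul_smul r t f := funext fun h => by
    show O.germHom ⟨U, h.down⟩ (r * t) • f h =
      O.germHom ⟨U, h.down⟩ r • O.germHom ⟨U, h.down⟩ t • f h
    rw [map_mul, mul_smul]
  smul_zero r := funext fun h => by
    show O.germHom ⟨U, h.down⟩ r • (0 : A) = 0
    simp
  smul_add r f g := funext fun h => by
    show O.germHom ⟨U, h.down⟩ r • (f h + g h) =
      O.germHom ⟨U, h.down⟩ r • f h + O.germHom ⟨U, h.down⟩ r • g h
    rw [smul_add]
  add_smul r t f := funext fun h => by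
    show O.germHom ⟨U, h.down⟩ (r + t) • f h =
      O.germHom ⟨U, h.down⟩ r • f h + O.germHom ⟨U, h.down⟩ t • f h
    rw [map_add, add_smul]
  zero_smul f := funext fun h => by
    show O.germHom ⟨U, h.down⟩ 0 • f h = 0
    simp

/-- The skyscraper sheaf at `x` with value the `RStalk O x`-module `A`. -/
def sky : OMod O where
  obj U := PLift (x ∈ U) → A
  acg U := inferInstance
  mod U := skyModule x A U
  res {U V} h :=
    { toFun := fun f hv => f ⟨h hv.down⟩
      map_zero' := rfl
      map_add' := fun _ _ => rfl }
  res_id _ := rfl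
  res_res _ _ _ := rfl
  res_smul {U V} h r f := by
    funext hv
    show O.germHom ⟨U, h hv.down⟩ r • f ⟨h hv.down⟩ =
      O.germHom ⟨V, hv.down⟩ (O.res h r) • f ⟨h hv.down⟩
    rw [show O.germHom (x := x) ⟨V, hv.down⟩ (O.res h r) = O.germHom ⟨U, h hv.down⟩ r from
      germ_res_ring (N₁ := ⟨U, h hv.down⟩) (N₂ := ⟨V, hv.down⟩) h r]
  sheaf := by
    intro ι U V hU s compat
    have mem : ∀ (h : x ∈ U), ∃ i, x ∈ V i := fun h => Opens.mem_iSup.mp (hU ▸ h)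
    refine ⟨fun h => s (mem h.down).choose ⟨(mem h.down).choose_spec⟩,
      fun i => funext fun hv => ?_, ?_⟩
    · have hU' : x ∈ U := ((le_iSup V i).trans hU.ge) hv.down
      exact congrFun (compat (mem hU').choose i (V (mem hU').choose ⊓ V i)
        inf_le_left inf_le_right) ⟨⟨(mem hU').choose_spec, hv.down⟩⟩
    · intro y hy
      funext h
      obtain ⟨i, hi⟩ := mem h.down
      have h1 : y h = s i ⟨hi⟩ := congrFun (hy i) ⟨hi⟩
      have h2 : s (mem h.down).choose ⟨(mem h.down).choose_spec⟩ = s i ⟨hi⟩ :=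
        congrFun (compat _ i (V (mem h.down).choose ⊓ V i) inf_le_left inf_le_right)
          ⟨⟨(mem h.down).choose_spec, hi⟩⟩
      rw [h1, h2]

end Sky

/-- Functoriality of the skyscraper sheaf. -/
def skyMap {x : X} {A B : Type u} [AddCommGroup A] [Module (RStalk O x) A]
    [AddCommGroup B] [Module (RStalk O x) B] (φ : A →ₗ[RStalk O x] B) :
    (sky x A : OMod O) ⟶ (sky x B : OMod O) where
  app U :=
    { toFun := fun f h => φ (f h)
      map_add' := fun f g => funext fun h => by
        show φ (f h + g h) = φ (f h) + φ (g h)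
        rw [map_add]
      map_smul' := fun r f => funext fun h => by
        show φ (O.germHom ⟨U, h.down⟩ r • f h) = O.germHom ⟨U, h.down⟩ r • φ (f h)
        rw [map_smul] }
  naturality _ _ := rfl

/-- The skyscraper sheaf functor. -/
def skyFunctor (O : RingSheaf X) (x : X) : ModuleCat.{u} (RStalk O x) ⥤ OMod O where
  obj A := sky x A
  map φ := skyMap φ.hom
  map_id A := rfl
  map_comp φ ψ := rfl

end SheafPurity

namespace SheafPurity

variable {X : Type u} [TopologicalSpace X] {O : RingSheaf X}

/-! ## Direct image along the inclusion of an open subset -/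

/-- The direct image `ι_{U,*}(M|_U)` of the restriction of `M` to an open set `U`:
its sections over `V` are the sections of `M` over `U ⊓ V`. -/
def pushforwardInto (U : Opens X) (M : OMod O) : OMod O where
  obj V := M.obj (U ⊓ V)
  acg V := inferInstance
  mod V := Module.compHom _ (O.res (inf_le_right : U ⊓ V ≤ V))
  res {V W} h := M.res (inf_le_inf_left U h)
  res_id s := M.res_id s
  res_res h1 h2 s := M.res_res _ _ s
  res_smul {V W} h r m := by
    show M.res (U := U ⊓ V) (V := U ⊓ W) (inf_le_inf_left U h) (O.res (inf_le_right : U ⊓ V ≤ V) r • m) =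
      O.res (inf_le_right : U ⊓ W ≤ W) (O.res h r) • M.res (U := U ⊓ V) (V := U ⊓ W) (inf_le_inf_left U h) m
    rw [M.res_smul, O.res_res, O.res_res]
  sheaf := by
    intro ι V₀ V hV s compat
    obtain ⟨t, ht, huniq⟩ := M.sheaf ι (U ⊓ V₀) (fun i => U ⊓ V i)
      (by rw [hV, inf_iSup_eq]) s
      (by
        intro i j W hWi hWj
        have hW : W ≤ U ⊓ (V i ⊓ V j) :=
          le_inf (hWi.trans inf_le_left)
            (le_inf (hWi.trans inf_le_right) (hWj.trans inf_le_right))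
        calc M.res hWi (s i)
            = M.res hW (M.res (inf_le_inf_left U inf_le_left) (s i)) := by
              rw [M.res_res]
          _ = M.res hW (M.res (inf_le_inf_left U inf_le_right) (s j)) :=
              congrArg (M.res hW) (compat i j (V i ⊓ V j) inf_le_left inf_le_right)
          _ = M.res hWj (s j) := by rw [M.res_res])
    exact ⟨t, fun i => ht i, fun y hy => huniq y fun i => hy i⟩

/-- The unit morphism `M ⟶ ι_{U,*}(M|_U)`, given by restriction of sections. -/
def pushforwardUnit (U : Opens X) (M : OMod O) : M ⟶ pushforwardInto U M where
  app V :=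
    { toFun := fun m => M.res (inf_le_right : U ⊓ V ≤ V) m
      map_add' := fun _ _ => map_add _ _ _
      map_smul' := fun r m => by
        show M.res (inf_le_right : U ⊓ V ≤ V) (r • m) = O.res (inf_le_right : U ⊓ V ≤ V) r • M.res (inf_le_right : U ⊓ V ≤ V) m
        rw [M.res_smul] }
  naturality {V W} h m := by
    show M.res _ (M.res _ m) = M.res _ (M.res _ m)
    rw [M.res_res, M.res_res]

/-! ## Binary products -/

/-- The binary product of two sheaves of modules. -/
def prod2 (M N : OMod O) : OMod O where
  obj U := M.obj U × N.obj U
  acg U := inferInstance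
  mod U := inferInstance
  res {U V} h := (M.res h).prodMap (N.res h)
  res_id s := Prod.ext (M.res_id s.1) (N.res_id s.2)
  res_res h1 h2 s := Prod.ext (M.res_res h1 h2 s.1) (N.res_res h1 h2 s.2)
  res_smul h r m := Prod.ext (M.res_smul h r m.1) (N.res_smul h r m.2)
  sheaf := by
    intro ι U V hU s compat
    obtain ⟨t₁, ht₁, hu₁⟩ := M.sheaf ι U V hU (fun i => (s i).1)
      (fun i j W hWi hWj => congrArg Prod.fst (compat i j W hWi hWj))
    obtain ⟨t₂, ht₂, hu₂⟩ := N.sheaf ι U V hU (fun i => (s i).2)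
      (fun i j W hWi hWj => congrArg Prod.snd (compat i j W hWi hWj))
    refine ⟨(t₁, t₂), fun i => ?_, fun y hy => ?_⟩
    · exact Prod.ext (ht₁ i) (ht₂ i)
    · have h₁ : y.1 = t₁ := hu₁ y.1 fun i => congrArg Prod.fst (hy i)
      have h₂ : y.2 = t₂ := hu₂ y.2 fun i => congrArg Prod.snd (hy i)
      exact Prod.ext h₁ h₂

/-- A sheaf of modules is trivial (zero) if all its section modules are trivial. -/
def IsZeroOMod (M : OMod O) : Prop := ∀ U, Subsingleton (M.obj U)

/-- An isomorphism of sheaves of modules. -/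
structure OModIso (M N : OMod O) where
  hom : M ⟶ N
  inv : N ⟶ M
  hom_inv : hom ≫ inv = 𝟙 M
  inv_hom : inv ≫ hom = 𝟙 N

/-- A sheaf of modules is indecomposable if it is nonzero and in any direct sum
decomposition one of the summands is zero. -/
def IndecomposableOMod (M : OMod O) : Prop :=
  (¬ IsZeroOMod M) ∧
    ∀ (A B : OMod O), Nonempty (OModIso M (prod2 A B)) → IsZeroOMod A ∨ IsZeroOMod B

/-- The canonical morphism from `M` to the skyscraper at `x` with value the stalk `M_x`. -/
def toSkyStalk (M : OMod O) (x : X) : M ⟶ (sky x (Stalk M x) : OMod O) where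
  app U :=
    { toFun := fun m h => germ ⟨U, h.down⟩ m
      map_add' := fun m₁ m₂ => funext fun h => germ_add _ _ _
      map_smul' := fun r m => funext fun h => by
        show germ ⟨U, h.down⟩ (r • m) = O.germHom ⟨U, h.down⟩ r • germ ⟨U, h.down⟩ m
        exact germ_smul _ _ _ }
  naturality {U V} h m := by
    funext hv
    show germ ⟨U, h hv.down⟩ m = germ ⟨V, hv.down⟩ (M.res h m)
    exact (germ_res (N₁ := ⟨U, h hv.down⟩) (N₂ := ⟨V, hv.down⟩) h m).symm

end SheafPurity

namespace SheafPurity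

variable {X : Type u} [TopologicalSpace X]

/-- The open subset of `X` corresponding to an open subset of the open subspace `U`. -/
def extendOpen (U : Opens X) (V : Opens ((U : Set X) : Type u)) : Opens X :=
  ⟨Subtype.val '' (V : Set ((U : Set X) : Type u)), U.2.isOpenMap_subtype_val _ V.2⟩

lemma extendOpen_mono (U : Opens X) {V W : Opens ((U : Set X) : Type u)} (h : V ≤ W) :
    extendOpen U V ≤ extendOpen U W :=
  Set.image_mono h

lemma extendOpen_iSup (U : Opens X) {ι : Type u} (V : ι → Opens ((U : Set X) : Type u)) :
    extendOpen U (iSup V) = iSup (fun i => extendOpen U (V i)) := by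
  apply Opens.ext
  simp only [extendOpen, Opens.coe_iSup, Set.image_iUnion]
  rfl

/-- The open subset of the subspace `U` obtained by intersecting with an open subset
of `X`. -/
def restrictOpen (U : Opens X) (W : Opens X) : Opens ((U : Set X) : Type u) :=
  ⟨Subtype.val ⁻¹' (W : Set X), (W.2).preimage continuous_subtype_val⟩

lemma extendOpen_restrictOpen (U : Opens X) {W : Opens X} (h : W ≤ extendOpen U ⊤) :
    extendOpen U (restrictOpen U W) = W := by
  apply Opens.ext
  show Subtype.val '' (Subtype.val ⁻¹' (W : Set X)) = (W : Set X)
  rw [Set.image_preimage_eq_inter_range, Subtype.range_val]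
  refine Set.inter_eq_self_of_subset_left ?_
  intro x hx
  have := h hx
  obtain ⟨y, _, rfl⟩ := this
  exact y.2

lemma restrictOpen_extendOpen (U : Opens X) (V : Opens ((U : Set X) : Type u)) :
    restrictOpen U (extendOpen U V) = V :=
  Opens.ext (Set.preimage_image_eq _ Subtype.val_injective)

/-- Restriction of the sheaf condition to an open subspace. -/
lemma isSheafFamily_restrict (U : Opens X) (F : Opens X → Type u)
    (res : ∀ (A B : Opens X), B ≤ A → F A → F B)
    (hF : IsSheafFamily X F res) :
    IsSheafFamily ((U : Set X) : Type u) (fun V => F (extendOpen U V))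
      (fun _ _ h s => res _ _ (extendOpen_mono U h) s) := by
  intro ι V₀ V hV s compat
  refine hF ι (extendOpen U V₀) (fun i => extendOpen U (V i))
    (by rw [hV, extendOpen_iSup]) s ?_
  intro i j W hWi hWj
  have hWi' : restrictOpen U W ≤ V i := by
    intro a ha
    obtain ⟨b, hb, hba⟩ := hWi ha
    exact (Subtype.val_injective hba) ▸ hb
  have hWj' : restrictOpen U W ≤ V j := by
    intro a ha
    obtain ⟨b, hb, hba⟩ := hWj ha
    exact (Subtype.val_injective hba) ▸ hb
  have eW : extendOpen U (restrictOpen U W) = W :=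
    extendOpen_restrictOpen U (hWi.trans (extendOpen_mono U le_top))
  revert hWi hWj
  rw [← eW]
  intro hWi hWj
  exact compat i j (restrictOpen U W) hWi' hWj'

variable {O : RingSheaf X}

/-- The restriction of a sheaf of rings to an open subspace. -/
def RingSheaf.restrict (O : RingSheaf X) (U : Opens X) :
    RingSheaf ((U : Set X) : Type u) where
  obj V := O.obj (extendOpen U V)
  ring V := inferInstance
  res h := O.res (extendOpen_mono U h)
  res_id s := O.res_id s
  res_res h1 h2 s := O.res_res _ _ s
  sheaf := isSheafFamily_restrict U O.obj (fun _ _ h s => O.res h s) O.sheaf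

/-- The restriction of a sheaf of modules to an open subspace. -/
def OMod.restrict (M : OMod O) (U : Opens X) : OMod (O.restrict U) where
  obj V := M.obj (extendOpen U V)
  acg V := inferInstance
  mod V := M.mod (extendOpen U V)
  res h := M.res (extendOpen_mono U h)
  res_id s := M.res_id s
  res_res h1 h2 s := M.res_res _ _ s
  res_smul h r m := M.res_smul (extendOpen_mono U h) r m
  sheaf := isSheafFamily_restrict U M.obj (fun _ _ h s => M.res h s) M.sheaf

end SheafPurity

namespace SheafPurity

variable {X : Type u} [TopologicalSpace X] {O : RingSheaf X}

section Helpers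

lemma res_factor {Y : Type u} [TopologicalSpace Y] {Q : RingSheaf Y} (M : OMod Q)
    {A B C : Opens Y} (h2 : B ≤ A) (h1 : C ≤ B) (h : C ≤ A) (s : M.obj A) :
    M.res h s = M.res h1 (M.res h2 s) := (M.res_res h1 h2 s).symm

lemma extendOpen_le_self (U : Opens X) (V : Opens ((U : Set X) : Type u)) :
    extendOpen U V ≤ U := by rintro x ⟨y, -, rfl⟩; exact y.2

lemma extRest_le (U W : Opens X) : extendOpen U (restrictOpen U W) ≤ W := by
  rintro x ⟨y, hy, rfl⟩; exact hy

lemma restrictOpen_mono (U : Opens X) {V W : Opens X} (h : W ≤ V) :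
    restrictOpen U W ≤ restrictOpen U V := fun _ ha => h ha

lemma mem_extendOpen_self (U : Opens X) {V : Opens ((U : Set X) : Type u)}
    {a : (U : Set X)} (h : a ∈ V) : (a : X) ∈ extendOpen U V := ⟨a, h, rfl⟩

lemma mem_restrictOpen_self (U : Opens X) {W : Opens X} {a : (U : Set X)}
    (h : (a : X) ∈ W) : a ∈ restrictOpen U W := h

lemma restrictOpen_iSup (U : Opens X) {ι : Type u} (V : ι → Opens X) :
    restrictOpen U (iSup V) = ⨆ i, restrictOpen U (V i) := by
  apply Opens.ext
  ext a
  constructor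
  · intro ha
    have : (a : X) ∈ iSup V := ha
    obtain ⟨i, hi⟩ := Opens.mem_iSup.mp this
    exact Set.mem_of_mem_of_subset (Opens.mem_iSup.mpr ⟨i, hi⟩ :
      a ∈ (⨆ i, restrictOpen U (V i))) le_rfl
  · intro ha
    obtain ⟨i, hi⟩ := Opens.mem_iSup.mp (show a ∈ ⨆ i, restrictOpen U (V i) from ha)
    exact Opens.mem_iSup.mpr ⟨i, hi⟩

end Helpers

section Ext0

variable {U : Opens X}

/-- Restriction of ring sections to the corresponding open of the subspace. -/
def resUV (O : RingSheaf X) (U V : Opens X) :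
    O.obj V →+* (O.restrict U).obj (restrictOpen U V) := O.res (extRest_le U V)


/-- The condition defining sections of the extension by zero: the section vanishes
near every point of `V` outside `U`. -/
def Ext0Cond (M : OMod (O.restrict U)) (V : Opens X) (s : M.obj (restrictOpen U V)) : Prop :=
  ∀ x ∈ V, x ∉ U → ∃ (W : Opens X) (hW : W ≤ V), x ∈ W ∧ M.res (restrictOpen_mono U hW) s = 0

/-- The subgroup of sections satisfying the extension-by-zero condition. -/
def ext0Sub (M : OMod (O.restrict U)) (V : Opens X) :
    AddSubgroup (M.obj (restrictOpen U V)) where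
  carrier := {s | Ext0Cond M V s}
  zero_mem' := fun x hx _ => ⟨V, le_rfl, hx, map_zero _⟩
  add_mem' := by
    rintro a b ha hb x hx hxU
    obtain ⟨Wa, hWa, hxa, ha0⟩ := ha x hx hxU
    obtain ⟨Wb, hWb, hxb, hb0⟩ := hb x hx hxU
    refine ⟨Wa ⊓ Wb, inf_le_left.trans hWa, ⟨hxa, hxb⟩, ?_⟩
    rw [map_add]
    rw [res_factor M (restrictOpen_mono U hWa)
      (restrictOpen_mono U (inf_le_left : Wa ⊓ Wb ≤ Wa)) _ a, ha0, map_zero,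
      res_factor M (restrictOpen_mono U hWb)
      (restrictOpen_mono U (inf_le_right : Wa ⊓ Wb ≤ Wb)) _ b, hb0, map_zero, add_zero]
  neg_mem' := by
    rintro a ha x hx hxU
    obtain ⟨Wa, hWa, hxa, ha0⟩ := ha x hx hxU
    exact ⟨Wa, hWa, hxa, by rw [map_neg, ha0, neg_zero]⟩

lemma ext0Sub_cond (M : OMod (O.restrict U)) {V : Opens X} (s : ext0Sub M V) :
    Ext0Cond M V s.val := s.2

/-- Scalar multiplication on extension-by-zero sections. -/
def ext0Smul (M : OMod (O.restrict U)) (V : Opens X) (r : O.obj V) (s : ext0Sub M V) :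
    ext0Sub M V :=
  ⟨resUV O U V r • s.val, by
    rintro x hx hxU
    obtain ⟨W, hW, hxW, h0⟩ := s.2 x hx hxU
    refine ⟨W, hW, hxW, ?_⟩
    rw [M.res_smul, h0, smul_zero]⟩

lemma ext0Smul_val (M : OMod (O.restrict U)) (V : Opens X) (r : O.obj V) (s : ext0Sub M V) :
    (ext0Smul M V r s).val = resUV O U V r • s.val := rfl

/-- The module structure on extension-by-zero sections. -/
def ext0Module (M : OMod (O.restrict U)) (V : Opens X) : Module (O.obj V) (ext0Sub M V) :=
  { smul := ext0Smul M V
    one_smul := fun s => Subtype.ext (by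
      show resUV O U V (1 : O.obj V) • s.val = s.val
      rw [map_one, one_smul])
    mul_smul := fun r t s => Subtype.ext (by
      show resUV O U V (r * t) • s.val = _
      rw [map_mul, mul_smul]; rfl)
    smul_zero := fun r => Subtype.ext (by
      show resUV O U V r • (0 : M.obj _) = 0
      rw [smul_zero])
    smul_add := fun r a b => Subtype.ext (by
      show resUV O U V r • (a.val + b.val) = _
      rw [smul_add]; rfl)
    add_smul := fun r t s => Subtype.ext (by
      show resUV O U V (r + t) • s.val = _
      rw [map_add, add_smul]; rfl)
    zero_smul := fun s => Subtype.ext (by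
      show resUV O U V (0 : O.obj V) • s.val = 0
      rw [map_zero, zero_smul]) }

attribute [local instance] ext0Module

/-- Restriction map for the extension by zero. -/
def ext0Res (M : OMod (O.restrict U)) {V W : Opens X} (h : W ≤ V) :
    ext0Sub M V →+ ext0Sub M W where
  toFun s := ⟨M.res (restrictOpen_mono U h) s.val, by
    rintro x hx hxU
    obtain ⟨W', hW', hxW', h0⟩ := s.2 x (h hx) hxU
    refine ⟨W' ⊓ W, inf_le_right, ⟨hxW', hx⟩, ?_⟩
    rw [M.res_res,
      res_factor M (restrictOpen_mono U hW')
        (restrictOpen_mono U (inf_le_left : W' ⊓ W ≤ W')) _ s.val, h0, map_zero]⟩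
  map_zero' := Subtype.ext (map_zero _)
  map_add' a b := Subtype.ext (map_add _ _ _)

lemma ext0Res_val (M : OMod (O.restrict U)) {V W : Opens X} (h : W ≤ V) (s : ext0Sub M V) :
    (ext0Res M h s).val = M.res (restrictOpen_mono U h) s.val := rfl

/-- The extension by zero of a sheaf of modules on an open subspace. -/
def ext0 (M : OMod (O.restrict U)) : OMod O where
  obj V := ext0Sub M V
  acg V := inferInstance
  mod V := ext0Module M V
  res h := ext0Res M h
  res_id s := Subtype.ext (M.res_id s.val)
  res_res h1 h2 s := Subtype.ext (M.res_res _ _ s.val)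
  res_smul {V W} h r m := Subtype.ext (by
    show M.res (restrictOpen_mono U h) (resUV O U V r • m.val)
      = resUV O U W (O.res h r) • M.res (restrictOpen_mono U h) m.val
    rw [M.res_smul]
    congr 1
    show O.res (extendOpen_mono U (restrictOpen_mono U h)) (O.res (extRest_le U V) r)
      = O.res (extRest_le U W) (O.res h r)
    rw [O.res_res, O.res_res])
  sheaf := by
    intro ι V Vf hV s compat
    have hres : restrictOpen U V = ⨆ i, restrictOpen U (Vf i) := by
      rw [hV, restrictOpen_iSup]
    have compat' : ∀ (i j : ι) (W' : Opens ((U : Set X) : Type u))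
        (hWi : W' ≤ restrictOpen U (Vf i)) (hWj : W' ≤ restrictOpen U (Vf j)),
        M.res hWi (s i).val = M.res hWj (s j).val := by
      intro i j W' hWi hWj
      have hWi' : extendOpen U W' ≤ Vf i :=
        (extendOpen_mono U hWi).trans (extRest_le U (Vf i))
      have hWj' : extendOpen U W' ≤ Vf j :=
        (extendOpen_mono U hWj).trans (extRest_le U (Vf j))
      have hcomp := compat i j (extendOpen U W') hWi' hWj'
      have hcomp' := congrArg (fun z => M.res ((restrictOpen_extendOpen U W').ge) z)
        (congrArg Subtype.val hcomp)
      simpa only [ext0Res_val, M.res_res] using hcomp'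
    obtain ⟨t, ht, huniq⟩ := M.sheaf ι (restrictOpen U V) (fun i => restrictOpen U (Vf i))
      hres (fun i => (s i).val) compat'
    refine ⟨⟨t, ?_⟩, fun i => Subtype.ext ?_, fun y hy => Subtype.ext ?_⟩
    · rintro x hx hxU
      have hx' : x ∈ iSup Vf := hV ▸ hx
      obtain ⟨i, hi⟩ := Opens.mem_iSup.mp hx'
      obtain ⟨W, hW, hxW, h0⟩ := (s i).2 x hi hxU
      refine ⟨W, hW.trans ((le_iSup Vf i).trans hV.ge), hxW, ?_⟩
      have hti : M.res (restrictOpen_mono U ((le_iSup Vf i).trans hV.ge)) t = (s i).val :=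
        ht i
      rw [res_factor M (restrictOpen_mono U ((le_iSup Vf i).trans hV.ge))
        (restrictOpen_mono U hW) _ t, hti]
      exact h0
    · exact ht i
    · refine huniq y.val fun i => ?_
      exact congrArg Subtype.val (hy i)

end Ext0

end SheafPurity

namespace SheafPurity

variable {X : Type u} [TopologicalSpace X] {O : RingSheaf X} {U : Opens X}

section Ext0Map

attribute [local instance] ext0Module

/-- Functoriality of the extension by zero. -/
def ext0Map {M M' : OMod (O.restrict U)} (f : Hom M M') : ext0 M ⟶ ext0 M' where
  app V :=
    { toFun := fun s => ⟨f.app (restrictOpen U V) s.val, by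
        rintro x hx hxU
        obtain ⟨W, hW, hxW, h0⟩ := s.2 x hx hxU
        refine ⟨W, hW, hxW, ?_⟩
        rw [f.naturality (restrictOpen_mono U hW) s.val, h0, map_zero]⟩
      map_add' := fun a b => Subtype.ext (map_add _ _ _)
      map_smul' := fun r s => Subtype.ext (by
        show f.app (restrictOpen U V) (resUV O U V r • s.val) = resUV O U V r • _
        exact map_smul _ _ _) }
  naturality {V W} h s := Subtype.ext (f.naturality (restrictOpen_mono U h) s.val)

lemma ext0Map_app_val {M M' : OMod (O.restrict U)} (f : Hom M M') (V : Opens X)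
    (s : (ext0 M).obj V) :
    (Hom.app (M := ext0 M) (N := ext0 M') (ext0Map f) V s).val
      = f.app (restrictOpen U V) s.val := rfl

end Ext0Map

section Ext0Stalks

attribute [local instance] ext0Module

variable {M : OMod (O.restrict U)}

lemma rres_chain2 (O : RingSheaf X) {A B C : Opens X} (p : C ≤ B) (q : B ≤ A) (r : C ≤ A)
    (s : O.obj A) : O.res p (O.res q s) = O.res r s := O.res_res p q s

lemma rres_chain3 (O : RingSheaf X) {A B C D : Opens X} (p : D ≤ C) (q : C ≤ B) (r : B ≤ A)
    (t : D ≤ A) (s : O.obj A) : O.res p (O.res q (O.res r s)) = O.res t s := by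
  rw [O.res_res, O.res_res]

lemma ext0_stalk_eq_zero {x : X} (hx : x ∉ U) (t : Stalk (ext0 M) x) : t = 0 := by
  obtain ⟨Nb, s, rfl⟩ := germ_surj t
  obtain ⟨W, hW, hxW, h0⟩ := s.2 x Nb.mem hx
  have h1 : germ Nb s = germ (⟨W, hxW⟩ : Nbhd x) ((ext0 M).res hW s) :=
    (germ_res (N₁ := Nb) (N₂ := ⟨W, hxW⟩) hW s).symm
  have h2 : (ext0 M).res hW s = 0 := Subtype.ext h0
  rw [h1, h2, germ_zero]

variable {x : X} (hx : x ∈ U)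

/-- An open neighbourhood of `x` in `X` induces one of `x` in the subspace `U`. -/
def toSub (Nb : Nbhd x) : Nbhd (⟨x, hx⟩ : (U : Set X)) :=
  ⟨restrictOpen U Nb.U, Nb.mem⟩

/-- An open neighbourhood in the subspace `U` induces one in `X`. -/
def ofSub (Nb : Nbhd (⟨x, hx⟩ : (U : Set X))) : Nbhd x :=
  ⟨extendOpen U Nb.U, mem_extendOpen_self U Nb.mem⟩

/-- The map from the stalk of the extension by zero at `x ∈ U` to the stalk of `M`. -/
def stalkDown : Stalk (ext0 M) x → Stalk M (⟨x, hx⟩ : (U : Set X)) :=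
  Quot.lift (fun a => germ (toSub hx a.1) a.2.val) (by
    rintro a b ⟨W, h₁, h₂, he⟩
    refine germ_eq (toSub hx W) (restrictOpen_mono U h₁) (restrictOpen_mono U h₂) ?_
    exact congrArg Subtype.val he)

lemma stalkDown_germ (Nb : Nbhd x) (s : (ext0 M).obj Nb.U) :
    stalkDown hx (germ Nb s) = germ (toSub hx Nb) s.val := rfl

/-- The map from the stalk of `M` at `x ∈ U` to the stalk of the extension by zero. -/
def stalkUp : Stalk M (⟨x, hx⟩ : (U : Set X)) → Stalk (ext0 M) x :=
  Quot.lift (fun a => germ (ofSub hx a.1)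
    (⟨M.res ((restrictOpen_extendOpen U a.1.U).le) a.2,
      fun y hy hyU => absurd (extendOpen_le_self U a.1.U hy) hyU⟩ : ext0Sub M _)) (by
    rintro a b ⟨W, h₁, h₂, he⟩
    refine germ_eq (ofSub hx W) (extendOpen_mono U h₁) (extendOpen_mono U h₂)
      (Subtype.ext ?_)
    show M.res (restrictOpen_mono U (extendOpen_mono U h₁)) (M.res _ a.2)
      = M.res (restrictOpen_mono U (extendOpen_mono U h₂)) (M.res _ b.2)
    rw [M.res_res, M.res_res,
      res_factor M h₁ ((restrictOpen_extendOpen U W.U).le) _ a.2, he,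
      res_factor M h₂ ((restrictOpen_extendOpen U W.U).le) _ b.2])

lemma stalkUp_germ (Nb : Nbhd (⟨x, hx⟩ : (U : Set X))) (s : M.obj Nb.U) :
    stalkUp hx (germ Nb s) = germ (ofSub hx Nb)
      (⟨M.res ((restrictOpen_extendOpen U Nb.U).le) s,
        fun y hy hyU => absurd (extendOpen_le_self U Nb.U hy) hyU⟩ : ext0Sub M _) := rfl

lemma stalkDown_stalkUp (t : Stalk M (⟨x, hx⟩ : (U : Set X))) :
    stalkDown hx (stalkUp hx t) = t := by
  obtain ⟨Nb, s, rfl⟩ := germ_surj t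
  erw [stalkUp_germ, stalkDown_germ]
  refine germ_eq Nb ((restrictOpen_extendOpen U Nb.U).ge) le_rfl ?_
  show M.res ((restrictOpen_extendOpen U Nb.U).ge)
      (M.res ((restrictOpen_extendOpen U Nb.U).le) s) = M.res le_rfl s
  rw [M.res_res]

lemma stalkUp_stalkDown (t : Stalk (ext0 M) x) : stalkUp hx (stalkDown hx t) = t := by
  obtain ⟨Nb, s, rfl⟩ := germ_surj t
  erw [stalkDown_germ, stalkUp_germ]
  refine germ_eq ⟨extendOpen U (restrictOpen U Nb.U),
      mem_extendOpen_self U (show (⟨x, hx⟩ : (U : Set X)) ∈ restrictOpen U Nb.U from Nb.mem)⟩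
    le_rfl (extRest_le U Nb.U) (Subtype.ext ?_)
  show M.res _ (M.res _ s.val) = M.res _ s.val
  exact M.res_res _ _ _

lemma stalkDown_zero : stalkDown (M := M) hx 0 = 0 := by
  have h0 : (0 : Stalk (ext0 M) x) = germ (default : Nbhd x) 0 := rfl
  rw [h0, stalkDown_germ]
  have : ((0 : (ext0 M).obj (default : Nbhd x).U)).val = 0 := rfl
  rw [this]
  exact germ_zero _

lemma stalkDown_add (a b : Stalk (ext0 M) x) :
    stalkDown hx (a + b) = stalkDown hx a + stalkDown hx b := by
  obtain ⟨N₁, s₁, rfl⟩ := germ_surj a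
  obtain ⟨N₂, s₂, rfl⟩ := germ_surj b
  erw [add_germ', stalkDown_germ, stalkDown_germ, stalkDown_germ, add_germ']
  refine germ_eq (toSub hx (N₁.inf N₂)) le_rfl
    (le_inf (restrictOpen_mono U (N₁.inf_le_left N₂)) (restrictOpen_mono U (N₁.inf_le_right N₂)))
    ?_
  show M.res _ (((ext0 M).res (N₁.inf_le_left N₂) s₁ + (ext0 M).res (N₁.inf_le_right N₂) s₂)).val
    = M.res _ (M.res _ s₁.val + M.res _ s₂.val)
  have hval : (((ext0 M).res (N₁.inf_le_left N₂) s₁ + (ext0 M).res (N₁.inf_le_right N₂) s₂)).val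
      = M.res (restrictOpen_mono U (N₁.inf_le_left N₂)) s₁.val
        + M.res (restrictOpen_mono U (N₁.inf_le_right N₂)) s₂.val := rfl
  erw [hval, map_add]

/-- The comparison map between stalk rings. -/
def stalkTheta : RStalk O x → RStalk (O.restrict U) (⟨x, hx⟩ : (U : Set X)) :=
  Quot.lift (fun a => germ (M := (O.restrict U).toOMod) (toSub hx a.1)
      (resUV O U a.1.U a.2)) (by
    rintro a b ⟨W, h₁, h₂, he⟩
    refine germ_eq (M := (O.restrict U).toOMod) (toSub hx W)
      (restrictOpen_mono U h₁) (restrictOpen_mono U h₂) ?_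
    show O.res (extendOpen_mono U (restrictOpen_mono U h₁)) (O.res (extRest_le U a.1.U) a.2)
      = O.res (extendOpen_mono U (restrictOpen_mono U h₂)) (O.res (extRest_le U b.1.U) b.2)
    have he' : O.res h₁ a.2 = O.res h₂ b.2 := he
    rw [O.res_res, O.res_res,
      (O.res_res (extRest_le U W.U) h₁ a.2).symm.trans (congrArg _ he'), O.res_res])

lemma stalkTheta_germ (Nb : Nbhd x) (r : O.obj Nb.U) :
    stalkTheta hx (germ (M := O.toOMod) Nb r)
      = germ (M := (O.restrict U).toOMod) (toSub hx Nb) (resUV O U Nb.U r) := rfl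

lemma stalkDown_smul (r : RStalk O x) (a : Stalk (ext0 M) x) :
    stalkDown hx (r • a) = stalkTheta hx r • stalkDown hx a := by
  obtain ⟨N₁, rr, rfl⟩ := germ_surj r
  obtain ⟨N₂, s, rfl⟩ := germ_surj a
  erw [smul_germ, stalkDown_germ, stalkDown_germ, stalkTheta_germ, smul_germ]
  refine germ_eq (toSub hx (N₁.inf N₂)) le_rfl
    (le_inf (restrictOpen_mono U (N₁.inf_le_left N₂)) (restrictOpen_mono U (N₁.inf_le_right N₂)))
    ?_
  have hval : ((O.res (N₁.inf_le_left N₂) rr • (ext0 M).res (N₁.inf_le_right N₂) s :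
        (ext0 M).obj (N₁.inf N₂).U)).val
      = resUV O U (N₁.inf N₂).U (O.res (N₁.inf_le_left N₂) rr)
        • M.res (restrictOpen_mono U (N₁.inf_le_right N₂)) s.val := rfl
  erw [hval, M.res_smul, M.res_smul]
  have ptot : extendOpen U (restrictOpen U (N₁.inf N₂).U) ≤ N₁.U :=
    (extRest_le U (N₁.inf N₂).U).trans (N₁.inf_le_left N₂)
  congr 1
  · exact (rres_chain3 O (extendOpen_mono U (le_refl (restrictOpen U (N₁.inf N₂).U)))
        (extRest_le U (N₁.inf N₂).U) (N₁.inf_le_left N₂) ptot rr).trans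
      (rres_chain3 O
        (extendOpen_mono U (le_inf (restrictOpen_mono U (N₁.inf_le_left N₂))
          (restrictOpen_mono U (N₁.inf_le_right N₂))))
        (extendOpen_mono U (inf_le_left : restrictOpen U N₁.U ⊓ restrictOpen U N₂.U ≤
          restrictOpen U N₁.U))
        (extRest_le U N₁.U) ptot rr).symm

lemma stalkDown_map {M' : OMod (O.restrict U)} (f : Hom M M') (t : Stalk (ext0 M) x) :
    stalkDown (M := M') hx (stalkMap (ext0Map f) x t)
      = stalkMap (M := M) (N := M') f (⟨x, hx⟩ : (U : Set X)) (stalkDown hx t) := by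
  obtain ⟨Nb, s, rfl⟩ := germ_surj t
  rfl

end Ext0Stalks

end SheafPurity

namespace SheafPurity

variable {X : Type u} [TopologicalSpace X] {O : RingSheaf X} {U : Opens X}

section Ext0Pure

variable {M M' : OMod (O.restrict U)}

/-- `stalkDown` as an additive monoid homomorphism. -/
def stalkDownHom {x : X} (hx : x ∈ U) (M : OMod (O.restrict U)) :
    Stalk (ext0 M) x →+ Stalk M (⟨x, hx⟩ : (U : Set X)) where
  toFun := stalkDown hx
  map_zero' := stalkDown_zero hx
  map_add' := stalkDown_add hx

lemma stalkDown_injective {x : X} (hx : x ∈ U) :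
    Function.Injective (stalkDown (M := M) hx) := fun a b h => by
  rw [← stalkUp_stalkDown hx a, ← stalkUp_stalkDown hx b, h]

lemma ext0Map_gpure (f : M ⟶ M') (hf : IsGPureMono f) : IsGPureMono (ext0Map f) := by
  constructor
  · intro V a b hab
    exact Subtype.ext (hf.1 (restrictOpen U V) (congrArg Subtype.val hab))
  · intro x
    by_cases hx : x ∈ U
    · obtain ⟨hinj, hpure⟩ := hf.2 (⟨x, hx⟩ : (U : Set X))
      constructor
      · intro a b h
        apply stalkDown_injective hx
        apply hinj
        rw [← stalkDown_map hx f a, ← stalkDown_map hx f b]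
        exact congrArg (stalkDown hx) h
      · intro m n G a b hb
        have hb' : ∀ i, (∑ j, stalkTheta hx (G i j) • stalkDown hx (b j))
            = stalkMap f (⟨x, hx⟩ : (U : Set X)) (stalkDown hx (a i)) := by
          intro i
          have hs : stalkDown hx (∑ j, G i j • b j)
              = ∑ j, stalkTheta hx (G i j) • stalkDown hx (b j) := by
            rw [show stalkDown hx (∑ j, G i j • b j)
                = ∑ j, stalkDown hx (G i j • b j) from map_sum (stalkDownHom hx M') _ _]
            exact Finset.sum_congr rfl fun j _ => stalkDown_smul hx _ _
          rw [← hs, hb i, stalkDown_map]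
        obtain ⟨a'', ha''⟩ := hpure m n (fun i j => stalkTheta hx (G i j))
          (fun i => stalkDown hx (a i)) (fun j => stalkDown hx (b j)) hb'
        refine ⟨fun j => stalkUp hx (a'' j), fun i => ?_⟩
        apply stalkDown_injective hx
        have hs : stalkDown hx (∑ j, G i j • stalkUp hx (a'' j))
            = ∑ j, stalkTheta hx (G i j) • a'' j := by
          rw [show stalkDown hx (∑ j, G i j • stalkUp hx (a'' j))
              = ∑ j, stalkDown hx (G i j • stalkUp hx (a'' j))
            from map_sum (stalkDownHom hx M) _ _]
          refine Finset.sum_congr rfl fun j _ => ?_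
          rw [stalkDown_smul hx, stalkDown_stalkUp]
        rw [hs, ha'' i]
    · constructor
      · intro a b _
        rw [ext0_stalk_eq_zero hx a, ext0_stalk_eq_zero hx b]
      · intro m n G a b _
        refine ⟨fun _ => 0, fun i => ?_⟩
        rw [ext0_stalk_eq_zero hx (a i)]
        simp

end Ext0Pure

end SheafPurity

namespace SheafPurity

variable {X : Type u} [TopologicalSpace X] {O : RingSheaf X} {U : Opens X}

section Glue

attribute [local instance] ext0Module

variable {M : OMod (O.restrict U)} {P : OMod O}

/-- Characterisation of the value of the extension of `φ` along the unit:
`t` restricts to `φ s` on `U ∩ V` and vanishes near every point of `V` outside `U`. -/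
def GoodSec (φ : M ⟶ P.restrict U) (V : Opens X) (s : ext0Sub M V) (t : P.obj V) : Prop :=
  P.res (extRest_le U V) t = Hom.app φ (restrictOpen U V) s.val ∧
  ∀ x ∈ V, x ∉ U → ∃ (W : Opens X) (hW : W ≤ V), x ∈ W ∧ P.res hW t = 0

lemma sec_unique (P : OMod O) {V : Opens X} {ι : Type u} (W : ι → Opens X) (hV : V = iSup W)
    {t₁ t₂ : P.obj V}
    (h : ∀ i, P.res ((le_iSup W i).trans hV.ge) t₁ = P.res ((le_iSup W i).trans hV.ge) t₂) :
    t₁ = t₂ := by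
  have compat : ∀ (i j : ι) (W' : Opens X) (hWi : W' ≤ W i) (hWj : W' ≤ W j),
      P.res hWi (P.res ((le_iSup W i).trans hV.ge) t₁)
        = P.res hWj (P.res ((le_iSup W j).trans hV.ge) t₁) := by
    intro i j W' hWi hWj
    rw [P.res_res, P.res_res]
  obtain ⟨t, _, huniq⟩ := P.sheaf ι V W hV (fun i => P.res ((le_iSup W i).trans hV.ge) t₁)
    compat
  exact (huniq t₁ fun i => rfl).trans (huniq t₂ fun i => (h i).symm).symm

lemma good_unique {φ : M ⟶ P.restrict U} {V : Opens X} {s : ext0Sub M V} {t₁ t₂ : P.obj V}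
    (h₁ : GoodSec φ V s t₁) (h₂ : GoodSec φ V s t₂) : t₁ = t₂ := by
  classical
  choose W₁ hW₁ hxW₁ hres₁ using h₁.2
  choose W₂ hW₂ hxW₂ hres₂ using h₂.2
  let Wf : Option {p : X // p ∈ V ∧ p ∉ U} → Opens X := fun i =>
    i.elim (extendOpen U (restrictOpen U V))
      (fun p => W₁ p.1 p.2.1 p.2.2 ⊓ W₂ p.1 p.2.1 p.2.2)
  have hV : V = iSup Wf := by
    apply le_antisymm
    · intro y hy
      by_cases hyU : y ∈ U
      · exact Opens.mem_iSup.mpr ⟨none, mem_extendOpen_self U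
          (show (⟨y, hyU⟩ : (U : Set X)) ∈ restrictOpen U V from hy)⟩
      · exact Opens.mem_iSup.mpr ⟨some ⟨y, hy, hyU⟩, ⟨hxW₁ _ _ _, hxW₂ _ _ _⟩⟩
    · refine iSup_le fun i => ?_
      cases i with
      | none => exact extRest_le U V
      | some p => exact inf_le_left.trans (hW₁ _ _ _)
  refine sec_unique P Wf hV fun i => ?_
  cases i with
  | none => exact h₁.1.trans h₂.1.symm
  | some p =>
    have e₁ : P.res ((le_iSup Wf (some p)).trans hV.ge) t₁ = 0 :=
      (res_factor P (hW₁ p.1 p.2.1 p.2.2) inf_le_left _ t₁).trans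
        (by rw [hres₁ p.1 p.2.1 p.2.2, map_zero]; rfl)
    have e₂ : P.res ((le_iSup Wf (some p)).trans hV.ge) t₂ = 0 :=
      (res_factor P (hW₂ p.1 p.2.1 p.2.2) inf_le_right _ t₂).trans
        (by rw [hres₂ p.1 p.2.1 p.2.2, map_zero]; rfl)
    rw [e₁, e₂]

lemma good_exists (φ : M ⟶ P.restrict U) (V : Opens X) (s : ext0Sub M V) :
    ∃ t : P.obj V, GoodSec φ V s t := by
  classical
  choose W hW hxW hres using s.2
  let Wf : Option {p : X // p ∈ V ∧ p ∉ U} → Opens X := fun i =>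
    i.elim (extendOpen U (restrictOpen U V)) (fun p => W p.1 p.2.1 p.2.2)
  have hV : V = iSup Wf := by
    apply le_antisymm
    · intro y hy
      by_cases hyU : y ∈ U
      · exact Opens.mem_iSup.mpr ⟨none, mem_extendOpen_self U
          (show (⟨y, hyU⟩ : (U : Set X)) ∈ restrictOpen U V from hy)⟩
      · exact Opens.mem_iSup.mpr ⟨some ⟨y, hy, hyU⟩, hxW _ _ _⟩
    · refine iSup_le fun i => ?_
      cases i with
      | none => exact extRest_le U V
      | some p => exact hW _ _ _
  let σ : ∀ i, P.obj (Wf i) := fun i =>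
    Option.rec (motive := fun i => P.obj (Wf i))
      (show P.obj (Wf none) from Hom.app φ (restrictOpen U V) s.val)
      (fun p => (0 : P.obj (Wf (some p)))) i
  have key : ∀ (p : {p : X // p ∈ V ∧ p ∉ U}) (W' : Opens X) (hW0 : W' ≤ Wf none),
      W' ≤ Wf (some p) → P.res hW0 (σ none) = 0 := by
    intro p W' hW0 hWp
    have hW'U : W' ≤ extendOpen U (⊤ : Opens ((U : Set X) : Type u)) := by
      intro y hy
      exact ⟨⟨y, extendOpen_le_self U (restrictOpen U V) (hW0 hy)⟩, trivial, rfl⟩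
    have eW : extendOpen U (restrictOpen U W') = W' := extendOpen_restrictOpen U hW'U
    have hWV : W' ≤ V := hW0.trans (extRest_le U V)
    refine (res_factor P (extendOpen_mono U (restrictOpen_mono U hWV)) eW.ge hW0
      (σ none)).trans ?_
    have e2 : P.res (extendOpen_mono U (restrictOpen_mono U hWV)) (σ none)
        = Hom.app φ (restrictOpen U W') (M.res (restrictOpen_mono U hWV) s.val) :=
      Hom.naturality φ (restrictOpen_mono U hWV) s.val
    rw [e2]
    have e3 : M.res (restrictOpen_mono U hWV) s.val = 0 :=
      (res_factor M (restrictOpen_mono U (hW p.1 p.2.1 p.2.2))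
        (restrictOpen_mono U hWp) _ s.val).trans
        (by rw [hres p.1 p.2.1 p.2.2, map_zero])
    erw [e3, map_zero, map_zero]
  have compat : ∀ (i j : Option {p : X // p ∈ V ∧ p ∉ U}) (W' : Opens X)
      (hWi : W' ≤ Wf i) (hWj : W' ≤ Wf j), P.res hWi (σ i) = P.res hWj (σ j) := by
    intro i j W' hWi hWj
    cases i with
    | none =>
      cases j with
      | none => rfl
      | some p => rw [key p W' hWi hWj]; exact (map_zero _).symm
    | some p =>
      cases j with
      | none => rw [key p W' hWj hWi]; exact map_zero _
      | some q => show P.res hWi 0 = P.res hWj 0; rw [map_zero, map_zero]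
  obtain ⟨t, ht, _⟩ := P.sheaf _ V Wf hV σ compat
  refine ⟨t, ht none, ?_⟩
  intro x hxV hxU
  exact ⟨Wf (some ⟨x, hxV, hxU⟩), (le_iSup Wf _).trans hV.ge, hxW _ _ _,
    ht (some ⟨x, hxV, hxU⟩)⟩

lemma good_res {φ : M ⟶ P.restrict U} {V V' : Opens X} (h : V' ≤ V) {s : ext0Sub M V}
    {t : P.obj V} (hg : GoodSec φ V s t) : GoodSec φ V' (ext0Res M h s) (P.res h t) := by
  constructor
  · have step : P.res (extRest_le U V') (P.res h t)
        = P.res (extendOpen_mono U (restrictOpen_mono U h)) (P.res (extRest_le U V) t) := by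
      rw [P.res_res, P.res_res]
    rw [step, hg.1]
    exact Hom.naturality φ (restrictOpen_mono U h) s.val
  · intro x hx hxU
    obtain ⟨W, hWV, hxW, h0⟩ := hg.2 x (h hx) hxU
    refine ⟨W ⊓ V', inf_le_right, ⟨hxW, hx⟩, ?_⟩
    rw [P.res_res, res_factor P hWV (inf_le_left : W ⊓ V' ≤ W) _ t, h0, map_zero]

lemma good_add {φ : M ⟶ P.restrict U} {V : Opens X} {s₁ s₂ : ext0Sub M V} {t₁ t₂ : P.obj V}
    (h₁ : GoodSec φ V s₁ t₁) (h₂ : GoodSec φ V s₂ t₂) : GoodSec φ V (s₁ + s₂) (t₁ + t₂) := by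
  constructor
  · rw [map_add, h₁.1, h₂.1]
    exact (map_add (Hom.app φ (restrictOpen U V)) s₁.val s₂.val).symm
  · intro x hx hxU
    obtain ⟨W₁, hW₁, hx₁, e₁⟩ := h₁.2 x hx hxU
    obtain ⟨W₂, hW₂, hx₂, e₂⟩ := h₂.2 x hx hxU
    refine ⟨W₁ ⊓ W₂, inf_le_left.trans hW₁, ⟨hx₁, hx₂⟩, ?_⟩
    rw [map_add, res_factor P hW₁ (inf_le_left : W₁ ⊓ W₂ ≤ W₁) _ t₁, e₁,
      res_factor P hW₂ (inf_le_right : W₁ ⊓ W₂ ≤ W₂) _ t₂, e₂, map_zero, map_zero, add_zero]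

lemma good_smul {φ : M ⟶ P.restrict U} {V : Opens X} (r : O.obj V) {s : ext0Sub M V}
    {t : P.obj V} (hg : GoodSec φ V s t) : GoodSec φ V (r • s) (r • t) := by
  constructor
  · rw [P.res_smul, hg.1]
    exact (map_smul (Hom.app φ (restrictOpen U V)) (resUV O U V r) s.val).symm
  · intro x hx hxU
    obtain ⟨W, hWV, hxW, h0⟩ := hg.2 x hx hxU
    exact ⟨W, hWV, hxW, by rw [P.res_smul, h0, smul_zero]⟩

/-- The extension of `φ : M ⟶ P|_U` to a morphism `ι_! M ⟶ P`. -/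
noncomputable def phiTilde (φ : M ⟶ P.restrict U) : ext0 M ⟶ P where
  app V :=
    { toFun := fun s => (good_exists φ V s).choose
      map_add' := fun a b => good_unique (good_exists φ V (a + b)).choose_spec
        (good_add (good_exists φ V a).choose_spec (good_exists φ V b).choose_spec)
      map_smul' := fun r s => good_unique (good_exists φ V (r • s)).choose_spec
        (good_smul r (good_exists φ V s).choose_spec) }
  naturality {V V'} h s :=
    good_unique (good_res h (good_exists φ V s).choose_spec)
      (good_exists φ V' (ext0Res M h s)).choose_spec

/-- Reinterpret a section of the restricted structure sheaf. -/
def ringOfRestrict (U : Opens X) (V' : Opens ((U : Set X) : Type u))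
    (r : (O.restrict U).obj V') : O.obj (extendOpen U V') := r

/-- The canonical inclusion of sections over an open of the subspace into the
extension by zero. -/
def embSec (M' : OMod (O.restrict U)) {V' : Opens ((U : Set X) : Type u)} (m : M'.obj V') :
    ext0Sub M' (extendOpen U V') :=
  ⟨M'.res ((restrictOpen_extendOpen U V').le) m,
    fun y hy hyU => absurd (extendOpen_le_self U V' hy) hyU⟩

/-- The morphism `M' ⟶ P|_U` induced by a morphism `ι_! M' ⟶ P`. -/
def psiOf (M' : OMod (O.restrict U)) (ψ' : ext0 M' ⟶ P) : M' ⟶ P.restrict U where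
  app V' :=
    { toFun := fun m => Hom.app ψ' (extendOpen U V') (embSec M' m)
      map_add' := fun a b => by
        rw [show embSec M' (a + b) = embSec M' a + embSec M' b from
          Subtype.ext (map_add _ _ _)]
        exact map_add _ _ _
      map_smul' := fun r m => by
        rw [show embSec M' (r • m) = ringOfRestrict U V' r • embSec M' m from
          Subtype.ext (by
            show M'.res ((restrictOpen_extendOpen U V').le) (r • m)
              = resUV O U (extendOpen U V') (ringOfRestrict U V' r)
                • M'.res ((restrictOpen_extendOpen U V').le) m
            rw [M'.res_smul]
            rfl)]
        exact map_smul (Hom.app ψ' (extendOpen U V')) (ringOfRestrict U V' r)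
          (embSec M' m) }
  naturality {V' W'} h m := by
    have e1 : (ext0 M').res (extendOpen_mono U h) (embSec M' m) = embSec M' (M'.res h m) :=
      Subtype.ext (by
        show M'.res _ (M'.res _ m) = M'.res _ (M'.res h m)
        rw [M'.res_res, M'.res_res])
    exact (Hom.naturality ψ' (extendOpen_mono U h) (embSec M' m)).trans (congrArg _ e1)

end Glue

end SheafPurity

open SheafPurity in
/-- Let `X` be a ringed space, `N` a g-pure-injective `O_X`-module, and
`U ⊆ X` open. Then the restriction `N|_U` is a g-pure-injective `O_U`-module. -/
theorem restriction_of_gPureInjective_is_gPureInjective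
    {X : Type u} [TopologicalSpace X] (O : RingSheaf X) (N : OMod O)
    (hN : GPureInjective N) (U : Opens X) :
    GPureInjective (N.restrict U) := by
  intro M M' f hf φ
  obtain ⟨ψ', hψ'⟩ := hN (ext0 M) (ext0 M') (ext0Map f) (ext0Map_gpure f hf) (phiTilde φ)
  refine ⟨psiOf M' ψ', ?_⟩
  apply Hom.ext
  funext V'
  apply LinearMap.ext
  intro m
  show Hom.app ψ' (extendOpen U V') (embSec M' (Hom.app f V' m)) = Hom.app φ V' m
  have e1 : embSec M' (Hom.app f V' m)
      = Hom.app (ext0Map f) (extendOpen U V') (embSec M m) :=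
    Subtype.ext (Hom.naturality f ((restrictOpen_extendOpen U V').le) m)
  rw [e1]
  have e2 : Hom.app ψ' (extendOpen U V') (Hom.app (ext0Map f) (extendOpen U V') (embSec M m))
      = Hom.app (phiTilde φ) (extendOpen U V') (embSec M m) :=
    congrArg (fun g : ext0 M ⟶ N => Hom.app g (extendOpen U V') (embSec M m)) hψ'
  rw [e2]
  refine good_unique (good_exists φ (extendOpen U V') (embSec M m)).choose_spec ?_
  constructor
  · exact Hom.naturality φ ((restrictOpen_extendOpen U V').le) m
  · intro y hy hyU
    exact absurd (extendOpen_le_self U V' hy) hyU
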